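/- In the topology on Map(S¹,S¹) induced by the homotopic distance, for a power map f_n (n ∈ ℤ, z ↦ zⁿ, n ≠ 0) and 0 < r ≤ 1, the open ball B_r(f_n) equals the homotopy class of f_n, and for r > 1, B_r(f_n) = Map(S¹,S¹). -/

import Mathlib

open ContinuousMap Set ENNReal

/-- Homotopic distance between continuous maps `f g : C(X, Y)`: the least `k`
such that some open cover `U_0, ..., U_k` of `X` satisfies
`f|_{U i} ≃ g|_{U i}` for all `i`; `⊤` if no such cover exists. -/
noncomputable def hD {X Y : Type*} [TopologicalSpace X] [TopologicalSpace Y]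
    (f g : C(X, Y)) : ℕ∞ :=
  sInf {n : ℕ∞ | ∃ k : ℕ, n = k ∧ ∃ U : Fin (k + 1) → Set X,
    (∀ i, IsOpen (U i)) ∧ (⋃ i, U i) = univ ∧
    ∀ i, (f.restrict (U i)).Homotopic (g.restrict (U i))}

/-- The open ball of radius `r` around `f` for the homotopic distance. -/
noncomputable def hBall {X Y : Type*} [TopologicalSpace X] [TopologicalSpace Y]
    (f : C(X, Y)) (r : ℝ) : Set C(X, Y) :=
  {g | (hD f g : ℝ≥0∞) < ENNReal.ofReal r}

/-- The topology on `Map(X,Y)` induced by the homotopic distance pseudometric,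
generated by the open balls. -/
noncomputable def hTop (X Y : Type*) [TopologicalSpace X] [TopologicalSpace Y] :
    TopologicalSpace C(X, Y) :=
  TopologicalSpace.generateFrom {s | ∃ (f : C(X, Y)) (r : ℝ), 0 < r ∧ s = hBall f r}


/-- The degree-`n` power map on the circle. -/
noncomputable def fpow (n : ℤ) : C(Circle, Circle) :=
  ⟨fun z => z ^ n, by continuity⟩

namespace Stmt13Aux

lemma restrict_eq_comp {X Y : Type*} [TopologicalSpace X] [TopologicalSpace Y]
    (f : C(X, Y)) (U : Set X) :
    f.restrict U = f.comp ⟨Subtype.val, continuous_subtype_val⟩ :=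
  ContinuousMap.ext fun _ => rfl

lemma homotopic_restrict {X Y : Type*} [TopologicalSpace X] [TopologicalSpace Y]
    {f g : C(X, Y)} (h : f.Homotopic g) (U : Set X) :
    (f.restrict U).Homotopic (g.restrict U) := by
  rw [restrict_eq_comp, restrict_eq_comp]
  exact ContinuousMap.Homotopic.comp h (ContinuousMap.Homotopic.refl _)

lemma homotopic_of_restrict_univ {X Y : Type*} [TopologicalSpace X] [TopologicalSpace Y]
    {f g : C(X, Y)}
    (h : (f.restrict (univ : Set X)).Homotopic (g.restrict univ)) : f.Homotopic g := by
  let e : C(X, (univ : Set X)) := ⟨fun x => ⟨x, mem_univ x⟩, Continuous.subtype_mk continuous_id _⟩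
  have h2 := ContinuousMap.Homotopic.comp h (ContinuousMap.Homotopic.refl e)
  have hf : (f.restrict (univ : Set X)).comp e = f := ContinuousMap.ext fun _ => rfl
  have hg : (g.restrict (univ : Set X)).comp e = g := ContinuousMap.ext fun _ => rfl
  rwa [hf, hg] at h2

lemma hD_eq_zero_iff {X Y : Type*} [TopologicalSpace X] [TopologicalSpace Y] (f g : C(X, Y)) :
    hD f g = 0 ↔ f.Homotopic g := by
  constructor
  · intro h
    have h0 : (0 : ℕ∞) ∈ {n : ℕ∞ | ∃ k : ℕ, n = k ∧ ∃ U : Fin (k + 1) → Set X,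
        (∀ i, IsOpen (U i)) ∧ (⋃ i, U i) = univ ∧
        ∀ i, (f.restrict (U i)).Homotopic (g.restrict (U i))} := by
      by_contra h0
      have h1 : (1 : ℕ∞) ≤ hD f g := by
        apply le_sInf
        rintro n ⟨k, rfl, hU⟩
        rcases Nat.eq_zero_or_pos k with hk | hk
        · subst hk
          exact absurd ⟨0, rfl, hU⟩ h0
        · exact_mod_cast hk
      rw [h] at h1
      exact absurd h1 (by simp)
    obtain ⟨k, hk, U, hopen, hcov, hhom⟩ := h0
    have hk0 : k = 0 := by exact_mod_cast hk.symm
    subst hk0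
    have hU0 : U 0 = univ := by
      apply eq_univ_of_forall
      intro x
      have hx : x ∈ ⋃ i, U i := hcov ▸ mem_univ x
      obtain ⟨i, hi⟩ := mem_iUnion.1 hx
      have hi0 : i = 0 := by omega
      rwa [← hi0]
    have := hhom 0
    rw [hU0] at this
    exact homotopic_of_restrict_univ this
  · intro h
    have hle : hD f g ≤ 0 := sInf_le ⟨0, rfl, fun _ => univ, fun _ => isOpen_univ, eq_univ_of_forall fun x => mem_iUnion.2 ⟨0, mem_univ x⟩,
      fun _ => homotopic_restrict h univ⟩
    exact le_antisymm hle zero_le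

lemma exp_pi_ne_one : Circle.exp Real.pi ≠ 1 := by
  intro hone
  rw [Circle.exp_eq_one] at hone
  obtain ⟨m, hm⟩ := hone
  have h3 : ((m : ℝ) * 2) * Real.pi = 1 * Real.pi := by linear_combination -hm
  have h2 : (m : ℝ) * 2 = 1 := mul_right_cancel₀ Real.pi_ne_zero h3
  have h4 : (m : ℤ) * 2 = 1 := by exact_mod_cast h2
  omega

/-- Auxiliary point: `exp π * (a⁻¹ * z)`, i.e. `-(a⁻¹ z)`. -/
noncomputable def wc (a z : Circle) : Circle := Circle.exp Real.pi * (a⁻¹ * z)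

lemma coe_wc (a z : Circle) : ((wc a z : Circle) : ℂ) = -((a⁻¹ * z : Circle) : ℂ) := by
  simp only [wc, Circle.coe_mul, Circle.coe_exp, Complex.exp_pi_mul_I, neg_one_mul]

lemma abs_arg_wc_lt (a : Circle) {z : Circle} (hz : z ≠ a) :
    |Complex.arg ((wc a z : Circle) : ℂ)| < Real.pi := by
  have hb : ((a⁻¹ * z : Circle) : ℂ) ≠ 1 := by
    intro h
    apply hz
    have h1 : (a⁻¹ * z : Circle) = 1 := Circle.coe_eq_one.1 h
    exact (inv_mul_eq_one.1 h1).symm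
  have hne : Complex.arg ((wc a z : Circle) : ℂ) ≠ Real.pi := by
    intro h
    rw [Complex.arg_eq_pi_iff, coe_wc] at h
    obtain ⟨h1, h2⟩ := h
    set b : ℂ := ((a⁻¹ * z : Circle) : ℂ) with hbdef
    rw [Complex.neg_re, neg_lt_zero] at h1
    rw [Complex.neg_im, neg_eq_zero] at h2
    have hn : Complex.normSq b = 1 := Circle.normSq_coe _
    rw [Complex.normSq_apply, h2] at hn
    have hre : b.re = 1 := by nlinarith
    exact hb (Complex.ext (by simpa using hre) (by simpa using h2))
  have h3 := Complex.neg_pi_lt_arg ((wc a z : Circle) : ℂ)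
  rw [abs_lt]
  exact ⟨h3, lt_of_le_of_ne (Complex.arg_le_pi _) hne⟩

lemma key_ne (a : Circle) {z : Circle} (hz : z ≠ a) {t : ℝ} (ht0 : 0 ≤ t) (ht1 : t ≤ 1) :
    a * Circle.exp (Real.pi + t * Complex.arg ((wc a z : Circle) : ℂ)) ≠ a := by
  intro h
  have h1 : Circle.exp (Real.pi + t * Complex.arg ((wc a z : Circle) : ℂ)) = 1 := mul_eq_left.1 h
  rw [Circle.exp_eq_one] at h1
  obtain ⟨m, hm⟩ := h1
  have habs := abs_arg_wc_lt a hz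
  set θ := Complex.arg ((wc a z : Circle) : ℂ) with hθ
  have h2 : |t * θ| < Real.pi := by
    calc |t * θ| = t * |θ| := by rw [abs_mul, _root_.abs_of_nonneg ht0]
    _ ≤ 1 * |θ| := mul_le_mul_of_nonneg_right ht1 (abs_nonneg _)
    _ < Real.pi := by rwa [one_mul]
  have h3 := abs_lt.1 h2
  have hpi := Real.pi_pos
  rcases le_or_gt m 0 with hm0 | hm0
  · have hmr : (m : ℝ) ≤ 0 := by exact_mod_cast hm0
    nlinarith [hm]
  · have hmr : (1 : ℝ) ≤ (m : ℝ) := by exact_mod_cast hm0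
    nlinarith [hm]

lemma mem_pt (a : Circle) : a * Circle.exp Real.pi ∈ {z : Circle | z ≠ a} := by
  intro h
  exact exp_pi_ne_one (mul_eq_left.1 h)

lemma retract_one (a z : Circle) :
    a * Circle.exp (Real.pi + Complex.arg ((wc a z : Circle) : ℂ)) = z := by
  rw [Circle.exp_add, Circle.exp_arg, wc,
    ← mul_assoc (Circle.exp Real.pi) (Circle.exp Real.pi), ← Circle.exp_add,
    show Real.pi + Real.pi = 2 * Real.pi by ring, Circle.exp_two_pi, one_mul,
    mul_inv_cancel_left]

/-- The contraction homotopy: any map on the circle minus a point is nullhomotopic. -/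
noncomputable def contraction (a : Circle) (h : C({z : Circle | z ≠ a}, Circle)) :
    ContinuousMap.Homotopy h (ContinuousMap.const _ (h ⟨a * Circle.exp Real.pi, mem_pt a⟩)) where
  toFun p := h ⟨a * Circle.exp (Real.pi +
      (1 - (p.1 : ℝ)) * Complex.arg ((wc a p.2.1 : Circle) : ℂ)),
    key_ne a p.2.2 (by linarith [p.1.2.2]) (by linarith [p.1.2.1])⟩
  continuous_toFun := by
    apply h.continuous.comp
    apply Continuous.subtype_mk
    refine continuous_const.mul (Circle.exp.continuous.comp ?_)
    refine continuous_const.add (Continuous.mul ?_ ?_)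
    · exact continuous_const.sub (continuous_subtype_val.comp continuous_fst)
    · have hc : Continuous fun p : unitInterval × {z : Circle | z ≠ a} => ((wc a p.2.1 : Circle) : ℂ) := by
        apply continuous_subtype_val.comp
        exact continuous_const.mul
          (continuous_const.mul (continuous_subtype_val.comp continuous_snd :
            Continuous fun p : unitInterval × {z : Circle | z ≠ a} => (p.2.1 : Circle)))
      refine continuous_iff_continuousAt.2 fun p => ?_
      have hmem : ((wc a p.2.1 : Circle) : ℂ) ∈ Complex.slitPlane := by
        rw [Complex.mem_slitPlane_iff_arg]
        refine ⟨?_, Circle.coe_ne_zero _⟩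
        have := abs_arg_wc_lt a p.2.2
        intro he
        rw [he] at this
        exact absurd this (by simp [abs_of_pos Real.pi_pos])
      have h5 : ContinuousAt (Complex.arg ∘ fun p : unitInterval × {z : Circle | z ≠ a} =>
          ((wc a p.2.1 : Circle) : ℂ)) p :=
        ContinuousAt.comp (x := p) (Complex.continuousAt_arg hmem) hc.continuousAt
      exact h5
  map_zero_left z := by
    show h _ = h z
    congr 1
    apply Subtype.ext
    show a * Circle.exp (Real.pi +
      (1 - ((0 : unitInterval) : ℝ)) * Complex.arg ((wc a z.1 : Circle) : ℂ)) = (z : Circle)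
    rw [show ((0 : unitInterval) : ℝ) = 0 from rfl, sub_zero, one_mul]
    exact retract_one a z.1
  map_one_left z := by
    show h _ = h _
    congr 1
    apply Subtype.ext
    show a * Circle.exp (Real.pi +
      (1 - ((1 : unitInterval) : ℝ)) * Complex.arg ((wc a z.1 : Circle) : ℂ)) =
      a * Circle.exp Real.pi
    rw [show ((1 : unitInterval) : ℝ) = 1 from rfl, sub_self, zero_mul, add_zero]

lemma const_homotopic {X : Type*} [TopologicalSpace X] (x y : Circle) :
    (ContinuousMap.const X x).Homotopic (ContinuousMap.const X y) := by
  refine ⟨⟨⟨fun p => x * Circle.exp ((p.1 : ℝ) * Complex.arg ((x⁻¹ * y : Circle) : ℂ)), ?_⟩, ?_, ?_⟩⟩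
  · exact continuous_const.mul (Circle.exp.continuous.comp
      ((continuous_subtype_val.comp continuous_fst).mul continuous_const))
  · intro z
    show x * Circle.exp (((0 : unitInterval) : ℝ) * Complex.arg ((x⁻¹ * y : Circle) : ℂ)) = x
    rw [show ((0 : unitInterval) : ℝ) = 0 from rfl, zero_mul, Circle.exp_zero, mul_one]
  · intro z
    show x * Circle.exp (((1 : unitInterval) : ℝ) * Complex.arg ((x⁻¹ * y : Circle) : ℂ)) = y
    rw [show ((1 : unitInterval) : ℝ) = 1 from rfl, one_mul, Circle.exp_arg, mul_inv_cancel_left]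

lemma homotopic_on (a : Circle) (h₁ h₂ : C({z : Circle | z ≠ a}, Circle)) :
    h₁.Homotopic h₂ :=
  ContinuousMap.Homotopic.trans ⟨contraction a h₁⟩
    (ContinuousMap.Homotopic.trans (const_homotopic _ _)
      (ContinuousMap.Homotopic.symm ⟨contraction a h₂⟩))

lemma hD_le_one (f g : C(Circle, Circle)) : hD f g ≤ 1 := by
  apply sInf_le
  refine ⟨1, by norm_cast, ![{z : Circle | z ≠ 1}, {z : Circle | z ≠ Circle.exp Real.pi}],
    ?_, ?_, ?_⟩
  · intro i
    fin_cases i <;> exact isOpen_ne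
  · apply eq_univ_of_forall
    intro z
    by_cases hz : z = 1
    · refine mem_iUnion.2 ⟨1, ?_⟩
      simp only [Matrix.cons_val_one, Matrix.head_cons, mem_setOf_eq, hz]
      exact fun hh => exp_pi_ne_one hh.symm
    · exact mem_iUnion.2 ⟨0, hz⟩
  · intro i
    fin_cases i
    · exact homotopic_on 1 _ _
    · exact homotopic_on (Circle.exp Real.pi) _ _

end Stmt13Aux

open Stmt13Aux in
theorem stmt13 (n : ℤ) (hn : n ≠ 0) :
    (∀ r : ℝ, 0 < r → r ≤ 1 → hBall (fpow n) r = {g | (fpow n).Homotopic g}) ∧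
    (∀ r : ℝ, 1 < r → hBall (fpow n) r = univ) := by
  constructor
  · intro r hr hr1
    ext g
    simp only [hBall, mem_setOf_eq]
    constructor
    · intro hg
      have h1 : (hD (fpow n) g : ℝ≥0∞) < 1 := by
        refine lt_of_lt_of_le hg ?_
        calc ENNReal.ofReal r ≤ ENNReal.ofReal 1 := ENNReal.ofReal_le_ofReal hr1
        _ = 1 := ENNReal.ofReal_one
      have h2 : hD (fpow n) g < 1 := by
        rw [show (1 : ℝ≥0∞) = ((1 : ℕ∞) : ℝ≥0∞) from (ENat.toENNReal_one).symm] at h1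
        exact_mod_cast h1
      have h3 : hD (fpow n) g = 0 := by
        by_contra hne
        exact absurd h2 (not_lt.2 (ENat.one_le_iff_ne_zero.2 hne))
      exact (hD_eq_zero_iff _ _).1 h3
    · intro hg
      have h3 : hD (fpow n) g = 0 := (hD_eq_zero_iff _ _).2 hg
      rw [h3]
      simpa using ENNReal.ofReal_pos.2 hr
  · intro r hr
    apply eq_univ_of_forall
    intro g
    show (hD (fpow n) g : ℝ≥0∞) < ENNReal.ofReal r
    calc (hD (fpow n) g : ℝ≥0∞) ≤ ((1 : ℕ∞) : ℝ≥0∞) := by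
          exact_mod_cast hD_le_one (fpow n) g
    _ = 1 := ENat.toENNReal_one
    _ = ENNReal.ofReal 1 := ENNReal.ofReal_one.symm
    _ < ENNReal.ofReal r := (ENNReal.ofReal_lt_ofReal_iff (lt_trans zero_lt_one hr)).2 hr
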